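/- Let Ω ⊆ ℂ be an open set, let K, L be compact subsets of the closure Ω̄, let s ≥ 1 be an integer and (p,q) ∈ ℕ×ℕ. Suppose g ∈ A^∞(Ω) satisfies: g ∈ D_{p,q}(ζ) for every ζ ∈ L, each Padé approximant [p/q]_{g,ζ} (ζ ∈ L) has no poles in K, and sup_{ζ∈L} sup_{z∈K} |([p/q]_{g,ζ})^{(l)}(z) − g^{(l)}(z)| < 1/s for every l = 0, 1, …, s. Then there exist a compact set T ⊆ Ω̄ with K ∪ L ⊆ T, a real number δ > 0 and m ∈ ℕ such that every g̃ ∈ A^∞(Ω) with sup_{z∈T} |g̃^{(l)}(z) − g^{(l)}(z)| < δ for all l = 0, 1, …, m satisfies the same three conditions: g̃ ∈ D_{p,q}(ζ) for every ζ ∈ L, each [p/q]_{g̃,ζ} has no poles in K, and sup_{ζ∈L} sup_{z∈K} |([p/q]_{g̃,ζ})^{(l)}(z) − g̃^{(l)}(z)| < 1/s for every l = 0, 1, …, s. -/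

import Mathlib

open Filter

noncomputable def taylorCoeff (f : ℂ → ℂ) (ζ : ℂ) (v : ℕ) : ℂ :=
  iteratedDeriv v f ζ / (Nat.factorial v : ℂ)

noncomputable def coeffZ (a : ℕ → ℂ) (k : ℤ) : ℂ :=
  if 0 ≤ k then a k.toNat else 0

/-- The q×q Hankel matrix with (i,j) entry `a (p-q+1+i+j)` (value 0 for negative index). -/
noncomputable def hankel (a : ℕ → ℂ) (p q : ℕ) : Matrix (Fin q) (Fin q) ℂ :=
  Matrix.of fun i j => coeffZ a ((p : ℤ) - (q : ℤ) + 1 + (i.1 : ℤ) + (j.1 : ℤ))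

/-- `f ∈ D_{p,q}(ζ)` for the coefficient sequence `a` of `f` at `ζ`:
either `q = 0` or the Hankel determinant is nonzero. -/
def MemD (a : ℕ → ℂ) (p q : ℕ) : Prop :=
  q = 0 ∨ (hankel a p q).det ≠ 0

/-- `Nu/De` (in the variable `w = z - ζ`) is a Padé approximant `[p/q]` of the series with
coefficients `a` : `deg Nu ≤ p`, `deg De ≤ q`, `De(0) = 1`, and the power series
`De(w)·Σ a_v w^v − Nu(w)` has vanishing coefficients in degrees `0,…,p+q`. -/
def IsPadeAt (a : ℕ → ℂ) (p q : ℕ) (Nu De : Polynomial ℂ) : Prop :=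
  Nu.natDegree ≤ p ∧ De.natDegree ≤ q ∧ De.coeff 0 = 1 ∧
    ∀ k ≤ p + q, (∑ i ∈ Finset.range (k + 1), De.coeff i * a (k - i)) = Nu.coeff k

/-- The coefficient sequence `a_v = fd v ζ / v!` built from the (extended) derivatives `fd`. -/
noncomputable def coeffOf (fd : ℕ → ℂ → ℂ) (ζ : ℂ) (v : ℕ) : ℂ :=
  fd v ζ / (Nat.factorial v : ℂ)

/-- `f ∈ A^∞(Ω)` with `fd l` the continuous extension of `f^{(l)}` to the closure of `Ω`. -/
def AInf (Ω : Set ℂ) (f : ℂ → ℂ) (fd : ℕ → ℂ → ℂ) : Prop :=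
  DifferentiableOn ℂ f Ω ∧ (∀ l, ContinuousOn (fd l) (closure Ω)) ∧
    ∀ l, ∀ z ∈ Ω, fd l z = iteratedDeriv l f z

/-- A Padé approximant `[p/q]` of the series `a` centered at `ζ` has no poles in `K` and all its
derivatives of order `l ≤ m` are uniformly `ε`-close on `K` to the corresponding `fd l`. -/
def PadeApproxDerivOn (a : ℕ → ℂ) (ζ : ℂ) (p q : ℕ) (fd : ℕ → ℂ → ℂ)
    (K : Set ℂ) (m : ℕ) (ε : ℝ) : Prop :=
  ∃ Nu De : Polynomial ℂ, IsPadeAt a p q Nu De ∧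
    (∀ z ∈ K, Polynomial.eval (z - ζ) De ≠ 0) ∧
    ∀ l ≤ m, ∀ z ∈ K,
      ‖iteratedDeriv l
        (fun w => Polynomial.eval (w - ζ) Nu / Polynomial.eval (w - ζ) De) z - fd l z‖ < ε

open Topology Polynomial

lemma lemA {α : Type*} [TopologicalSpace α] (F : α × ℂ → ℂ) (hF : Continuous F)
    {x : ℕ → α} {x₀ : α} (hx : Tendsto x atTop (𝓝 x₀)) (K : Set ℂ) (hK : IsCompact K) :
    TendstoUniformlyOn (fun n z => F (x n, z)) (fun z => F (x₀, z)) atTop K := by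
  rw [tendstoUniformlyOn_iff_tendstoUniformly_comp_coe]
  haveI : CompactSpace K := isCompact_iff_compactSpace.mp hK
  let G : C(α × K, ℂ) := ⟨fun p => F (p.1, p.2.1), by fun_prop⟩
  have h1 : Tendsto (fun n => G.curry (x n)) atTop (𝓝 (G.curry x₀)) :=
    (G.curry.continuous.tendsto x₀).comp hx
  have := ContinuousMap.tendsto_iff_tendstoUniformly.mp h1
  exact this

/-- uniform convergence of shifted polynomial evaluations -/
lemma lemB {d : ℕ} {Pn : ℕ → Polynomial ℂ} {P : Polynomial ℂ}
    (hd : ∀ n, (Pn n).natDegree < d) (hdP : P.natDegree < d)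
    (hcoeff : ∀ k, Tendsto (fun n => (Pn n).coeff k) atTop (𝓝 (P.coeff k)))
    {ζn : ℕ → ℂ} {ζ : ℂ} (hζ : Tendsto ζn atTop (𝓝 ζ)) (K : Set ℂ) (hK : IsCompact K) :
    TendstoUniformlyOn (fun n z => (Pn n).eval (z - ζn n)) (fun z => P.eval (z - ζ)) atTop K := by
  have := lemA (α := (Fin d → ℂ) × ℂ)
    (fun pr => ∑ i : Fin d, pr.1.1 i * (pr.2 - pr.1.2) ^ (i : ℕ)) (by fun_prop)
    (x := fun n => (fun i : Fin d => (Pn n).coeff i, ζn n))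
    (x₀ := (fun i : Fin d => P.coeff i, ζ))
    (by exact Tendsto.prodMk_nhds (tendsto_pi_nhds.mpr fun i => hcoeff (i : ℕ)) hζ) K hK
  have e : ∀ (Q : Polynomial ℂ), Q.natDegree < d → ∀ t z : ℂ,
      (∑ i : Fin d, Q.coeff i * (z - t) ^ (i : ℕ)) = Q.eval (z - t) := by
    intro Q hQ t z
    rw [Polynomial.eval_eq_sum_range' hQ, ← Fin.sum_univ_eq_sum_range (fun i => Q.coeff i * (z - t) ^ i) d]
  exact (this.congr (Eventually.of_forall fun n z _ => e (Pn n) (hd n) (ζn n) z)).congr_right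
    (fun z _ => e P hdP ζ z)

noncomputable def ratNum (A B : Polynomial ℂ) : ℕ → Polynomial ℂ
  | 0 => A
  | (l+1) => (ratNum A B l).derivative * B - ((l+1 : ℕ) : ℂ) • ((ratNum A B l) * B.derivative)

lemma ratNum_natDegree_le (A B : Polynomial ℂ) (a b : ℕ) (hA : A.natDegree ≤ a)
    (hB : B.natDegree ≤ b) (l : ℕ) : (ratNum A B l).natDegree ≤ a + l * (b + 1) := by
  induction l with
  | zero => simpa [ratNum] using hA
  | succ l ih =>
      refine le_trans (natDegree_sub_le _ _) (max_le ?_ ?_)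
      · refine le_trans (natDegree_mul_le) ?_
        have := Polynomial.natDegree_derivative_le (ratNum A B l)
        have : (ratNum A B l).derivative.natDegree ≤ a + l * (b+1) :=
          le_trans this (le_trans (Nat.sub_le _ _) ih)
        calc (ratNum A B l).derivative.natDegree + B.natDegree ≤ (a + l*(b+1)) + b := by
              omega
          _ ≤ a + (l+1)*(b+1) := by ring_nf; omega
      · refine le_trans (natDegree_smul_le _ _) (le_trans natDegree_mul_le ?_)
        have h2 := le_trans (Polynomial.natDegree_derivative_le B) (Nat.sub_le _ _)
        calc (ratNum A B l).natDegree + B.derivative.natDegree ≤ (a + l*(b+1)) + b := by omega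
          _ ≤ a + (l+1)*(b+1) := by ring_nf; omega

lemma iteratedDeriv_ratio (A B : Polynomial ℂ) (ζ : ℂ) (l : ℕ) :
    ∀ z : ℂ, B.eval (z - ζ) ≠ 0 →
      iteratedDeriv l (fun w => A.eval (w - ζ) / B.eval (w - ζ)) z =
        (ratNum A B l).eval (z - ζ) / (B.eval (z - ζ)) ^ (l + 1) := by
  induction l with
  | zero => intro z hz; simp [ratNum, iteratedDeriv_zero]
  | succ l ih =>
      intro z hz
      rw [iteratedDeriv_succ]
      have hV : IsOpen {w : ℂ | B.eval (w - ζ) ≠ 0} := by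
        have : Continuous fun w : ℂ => B.eval (w - ζ) := by fun_prop
        exact isOpen_ne.preimage this
      have hev : iteratedDeriv l (fun w => A.eval (w - ζ) / B.eval (w - ζ)) =ᶠ[𝓝 z]
          fun w => (ratNum A B l).eval (w - ζ) / (B.eval (w - ζ)) ^ (l + 1) := by
        filter_upwards [hV.mem_nhds hz] with w hw using ih w hw
      rw [hev.deriv_eq]
      have hu : HasDerivAt (fun w : ℂ => (ratNum A B l).eval (w - ζ))
          ((ratNum A B l).derivative.eval (z - ζ)) z := by
        simpa [Function.comp_def] using (Polynomial.hasDerivAt (ratNum A B l) (z - ζ)).comp z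
          ((hasDerivAt_id z).sub_const ζ)
      have hb : HasDerivAt (fun w : ℂ => B.eval (w - ζ)) (B.derivative.eval (z - ζ)) z := by
        simpa [Function.comp_def] using (Polynomial.hasDerivAt B (z - ζ)).comp z ((hasDerivAt_id z).sub_const ζ)
      have hv : HasDerivAt (fun w : ℂ => (B.eval (w - ζ)) ^ (l + 1))
          ((l+1 : ℕ) * (B.eval (z - ζ)) ^ l * B.derivative.eval (z - ζ)) z := by
        simpa [Pi.pow_def] using hb.pow (l+1)
      have hvne : (B.eval (z - ζ)) ^ (l + 1) ≠ 0 := pow_ne_zero _ hz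
      have := (hu.fun_div hv hvne).deriv
      rw [this]
      show _ = (ratNum A B (l+1)).eval (z - ζ) / (B.eval (z - ζ)) ^ (l + 1 + 1)
      rw [ratNum]
      simp only [eval_sub, eval_mul, eval_smul, smul_eq_mul]
      field_simp
      ring

/-- coefficientwise convergence of polynomials -/
def CTend (Pn : ℕ → Polynomial ℂ) (P : Polynomial ℂ) : Prop :=
  ∀ k, Tendsto (fun n => (Pn n).coeff k) atTop (𝓝 (P.coeff k))

lemma CTend.derivative {Pn P} (h : CTend Pn P) : CTend (fun n => (Pn n).derivative) P.derivative := by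
  intro k
  simp only [Polynomial.coeff_derivative]
  exact (h (k+1)).mul_const _

lemma CTend.mul {Pn P Qn Q} (hP : CTend Pn P) (hQ : CTend Qn Q) :
    CTend (fun n => Pn n * Qn n) (P * Q) := by
  intro k
  simp only [Polynomial.coeff_mul]
  exact tendsto_finset_sum _ fun x _ => (hP x.1).mul (hQ x.2)

lemma CTend.sub {Pn P Qn Q} (hP : CTend Pn P) (hQ : CTend Qn Q) :
    CTend (fun n => Pn n - Qn n) (P - Q) := by
  intro k
  simp only [Polynomial.coeff_sub]
  exact (hP k).sub (hQ k)

lemma CTend.smul {Pn P} (c : ℂ) (h : CTend Pn P) : CTend (fun n => c • Pn n) (c • P) := by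
  intro k
  simp only [Polynomial.coeff_smul, smul_eq_mul]
  exact (h k).const_mul _

lemma CTend.ratNum {An A Bn B} (hA : CTend An A) (hB : CTend Bn B) (l : ℕ) :
    CTend (fun n => ratNum (An n) (Bn n) l) (ratNum A B l) := by
  induction l with
  | zero => exact hA
  | succ l ih => exact (ih.derivative.mul hB).sub (CTend.smul (((l+1 : ℕ) : ℂ)) (ih.mul hB.derivative))

noncomputable def polyOf (c : ℕ → ℂ) (d : ℕ) : Polynomial ℂ :=
  ∑ i ∈ Finset.range (d+1), Polynomial.C (c i) * Polynomial.X ^ i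

lemma polyOf_coeff (c : ℕ → ℂ) (d k : ℕ) :
    (polyOf c d).coeff k = if k ≤ d then c k else 0 := by
  rw [polyOf, Polynomial.finset_sum_coeff]
  simp only [Polynomial.coeff_C_mul, Polynomial.coeff_X_pow, mul_ite, mul_one, mul_zero]
  rw [Finset.sum_ite_eq (Finset.range (d+1)) k c]
  simp [Nat.lt_succ_iff]

lemma polyOf_natDegree (c : ℕ → ℂ) (d : ℕ) : (polyOf c d).natDegree ≤ d := by
  refine Polynomial.natDegree_sum_le_of_forall_le _ _ fun i hi => ?_
  refine le_trans (Polynomial.natDegree_C_mul_le _ _) ?_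
  simpa [Polynomial.natDegree_X_pow] using Nat.lt_succ_iff.mp (Finset.mem_range.mp hi)

/-- the matrix of the Padé linear system -/
noncomputable def padeM (a : ℕ → ℂ) (p q : ℕ) : Matrix (Fin q) (Fin q) ℂ :=
  (hankel a p q).submatrix id Fin.rev

noncomputable def padeB (a : ℕ → ℂ) (p q : ℕ) : Fin q → ℂ :=
  fun r => -(coeffZ a ((p : ℤ) + 1 + (r.1 : ℤ)))

noncomputable def padeD (a : ℕ → ℂ) (p q : ℕ) : Fin q → ℂ :=
  (padeM a p q)⁻¹.mulVec (padeB a p q)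

lemma padeM_apply (a : ℕ → ℂ) (p q : ℕ) (r j : Fin q) :
    padeM a p q r j = coeffZ a ((p : ℤ) + (r.1 : ℤ) - (j.1 : ℤ)) := by
  have hj : (j : ℕ) < q := j.2
  have : (((q - 1 - (j:ℕ) : ℕ)) : ℤ) = (q : ℤ) - 1 - (j : ℕ) := by omega
  simp only [padeM, Matrix.submatrix_apply, id, hankel, Matrix.of_apply, Fin.val_rev]
  congr 1
  have : ((q - ((j:ℕ) + 1) : ℕ) : ℤ) = (q : ℤ) - (j:ℕ) - 1 := by omega
  rw [this]; ring

lemma padeM_det_ne_iff (a : ℕ → ℂ) (p q : ℕ) :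
    (padeM a p q).det ≠ 0 ↔ (hankel a p q).det ≠ 0 := by
  rw [padeM]
  have : (hankel a p q).submatrix id Fin.rev = (hankel a p q).submatrix id ⇑(Fin.revPerm) := rfl
  rw [this, Matrix.det_permute']
  constructor
  · intro h h0; simp [h0] at h
  · intro h h0
    rcases mul_eq_zero.mp h0 with h1 | h1
    · rcases Int.units_eq_one_or (Equiv.Perm.sign (Fin.revPerm (n := q))) with h2 | h2 <;>
        simp [h2] at h1
    · exact h h1

lemma memD_iff (a : ℕ → ℂ) (p q : ℕ) : MemD a p q ↔ (padeM a p q).det ≠ 0 := by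
  constructor
  · rintro (rfl | h)
    · simp [Matrix.det_isEmpty]
    · exact (padeM_det_ne_iff a p q).mpr h
  · intro h
    rcases Nat.eq_zero_or_pos q with rfl | hq
    · exact Or.inl rfl
    · exact Or.inr ((padeM_det_ne_iff a p q).mp h)

noncomputable def SZ (a : ℕ → ℂ) (q : ℕ) (De : Polynomial ℂ) (k : ℕ) : ℂ :=
  ∑ i ∈ Finset.range (q+1), De.coeff i * coeffZ a ((k : ℤ) - (i : ℤ))

lemma sum_eq_SZ (a : ℕ → ℂ) (q : ℕ) (De : Polynomial ℂ) (hDe : De.natDegree ≤ q) (k : ℕ) :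
    (∑ i ∈ Finset.range (k + 1), De.coeff i * a (k - i)) = SZ a q De k := by
  have h1 : (∑ i ∈ Finset.range (k + 1), De.coeff i * a (k - i)) =
      ∑ i ∈ Finset.range (k+1), De.coeff i * coeffZ a ((k : ℤ) - (i : ℤ)) := by
    refine Finset.sum_congr rfl fun i hi => ?_
    have hik : i ≤ k := Nat.lt_succ_iff.mp (Finset.mem_range.mp hi)
    have : coeffZ a ((k : ℤ) - (i : ℤ)) = a (k - i) := by
      rw [coeffZ, if_pos (by omega)]
      congr 1
      omega
    rw [this]
  rw [h1, SZ]
  rcases le_total k q with hkq | hqk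
  · refine Finset.sum_subset (by intro x hx; simp at hx ⊢; omega) ?_
    intro x hx hx'
    simp only [Finset.mem_range] at hx hx'
    have : coeffZ a ((k:ℤ) - x) = 0 := by rw [coeffZ, if_neg (by omega)]
    rw [this, mul_zero]
  · symm
    refine Finset.sum_subset (by intro x hx; simp at hx ⊢; omega) ?_
    intro x hx hx'
    simp only [Finset.mem_range] at hx hx'
    have : De.coeff x = 0 := Polynomial.coeff_eq_zero_of_natDegree_lt (by omega)
    rw [this, zero_mul]

lemma SZ_split (a : ℕ → ℂ) (p q : ℕ) (De : Polynomial ℂ) (r : Fin q) :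
    SZ a q De (p + 1 + r.1) = De.coeff 0 * coeffZ a ((p:ℤ) + 1 + r.1) +
      (padeM a p q).mulVec (fun j => De.coeff (j.1 + 1)) r := by
  rw [SZ, Finset.sum_range_succ', add_comm]
  have earg : (↑(p + 1 + r.1) : ℤ) - ((0:ℕ) : ℤ) = (p:ℤ) + 1 + r.1 := by push_cast; ring
  rw [earg]
  congr 1
  rw [Matrix.mulVec]
  rw [← Fin.sum_univ_eq_sum_range
    (fun i => De.coeff (i+1) * coeffZ a ((↑(p + 1 + r.1) : ℤ) - (↑(i+1) : ℕ))) q]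
  refine Finset.sum_congr rfl fun j _ => ?_
  show _ = padeM a p q r j * De.coeff (j.1 + 1)
  rw [padeM_apply, mul_comm]
  congr 2
  push_cast; ring

/-- from IsPadeAt: the denominator coefficients solve the linear system -/
lemma isPadeAt_system {a : ℕ → ℂ} {p q : ℕ} {Nu De : Polynomial ℂ}
    (h : IsPadeAt a p q Nu De) :
    (padeM a p q).mulVec (fun j => De.coeff (j.1 + 1)) = padeB a p q := by
  obtain ⟨hNu, hDe, hDe0, hcoef⟩ := h
  funext r
  have hk : p + 1 + r.1 ≤ p + q := by have := r.2; omega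
  have h1 := hcoef (p + 1 + r.1) hk
  rw [sum_eq_SZ a q De hDe, SZ_split] at h1
  have h2 : Nu.coeff (p + 1 + r.1) = 0 :=
    Polynomial.coeff_eq_zero_of_natDegree_lt (by omega)
  rw [h2, hDe0, one_mul] at h1
  rw [padeB]
  linear_combination h1

noncomputable def padeDe (a : ℕ → ℂ) (p q : ℕ) : Polynomial ℂ :=
  polyOf (fun i => if h : i = 0 then 1 else if h2 : i - 1 < q then padeD a p q ⟨i-1, h2⟩ else 0) q

noncomputable def padeNu (a : ℕ → ℂ) (p q : ℕ) : Polynomial ℂ :=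
  polyOf (fun k => SZ a q (padeDe a p q) k) p

lemma padeDe_coeff_zero (a : ℕ → ℂ) (p q : ℕ) : (padeDe a p q).coeff 0 = 1 := by
  rw [padeDe, polyOf_coeff]; simp

lemma padeDe_natDegree (a : ℕ → ℂ) (p q : ℕ) : (padeDe a p q).natDegree ≤ q :=
  polyOf_natDegree _ _

lemma padeNu_natDegree (a : ℕ → ℂ) (p q : ℕ) : (padeNu a p q).natDegree ≤ p :=
  polyOf_natDegree _ _

lemma padeDe_coeff_succ (a : ℕ → ℂ) (p q : ℕ) (j : Fin q) :
    (padeDe a p q).coeff (j.1 + 1) = padeD a p q j := by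
  have hj := j.2
  rw [padeDe, polyOf_coeff, if_pos (by omega)]
  rw [dif_neg (by omega), dif_pos (by omega : j.1 + 1 - 1 < q)]
  congr 1

lemma mulVec_eq_of_isUnit {q : ℕ} {M : Matrix (Fin q) (Fin q) ℂ} (hM : IsUnit M.det)
    {v b : Fin q → ℂ} (h : M.mulVec v = b) : v = M⁻¹.mulVec b := by
  rw [← h, Matrix.mulVec_mulVec, Matrix.nonsing_inv_mul M hM, Matrix.one_mulVec]

lemma pade_system_canonical (a : ℕ → ℂ) (p q : ℕ) (hdet : IsUnit (padeM a p q).det) :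
    (padeM a p q).mulVec (padeD a p q) = padeB a p q := by
  rw [padeD, Matrix.mulVec_mulVec, Matrix.mul_nonsing_inv _ hdet, Matrix.one_mulVec]

lemma isPadeAt_canonical (a : ℕ → ℂ) (p q : ℕ) (hdet : IsUnit (padeM a p q).det) :
    IsPadeAt a p q (padeNu a p q) (padeDe a p q) := by
  refine ⟨padeNu_natDegree a p q, padeDe_natDegree a p q, padeDe_coeff_zero a p q, ?_⟩
  intro k hk
  rw [sum_eq_SZ a q _ (padeDe_natDegree a p q) k, padeNu, polyOf_coeff]
  rcases le_or_gt k p with hkp | hkp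
  · rw [if_pos hkp]
  · rw [if_neg (by omega)]
    have hr : k - p - 1 < q := by omega
    set r : Fin q := ⟨k - p - 1, hr⟩
    have hkr : k = p + 1 + r.1 := by simp only [r]; omega
    rw [hkr, SZ_split, padeDe_coeff_zero, one_mul]
    have : (fun j : Fin q => (padeDe a p q).coeff (j.1 + 1)) = padeD a p q := by
      funext j; exact padeDe_coeff_succ a p q j
    rw [this, pade_system_canonical a p q hdet, padeB]
    ring

/-- uniqueness: any IsPadeAt pair has the canonical denominator coefficients -/
lemma isPadeAt_de_coeff {a : ℕ → ℂ} {p q : ℕ} {Nu De : Polynomial ℂ}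
    (h : IsPadeAt a p q Nu De) (hdet : IsUnit (padeM a p q).det) (j : Fin q) :
    De.coeff (j.1 + 1) = padeD a p q j := by
  have h1 := isPadeAt_system h
  have := mulVec_eq_of_isUnit hdet h1
  rw [← padeD] at this
  exact congrFun this j

section Tendsto
variable {an : ℕ → ℕ → ℂ} {a : ℕ → ℂ}

lemma tendsto_coeffZ (ha : ∀ v, Tendsto (fun n => an n v) atTop (𝓝 (a v))) (k : ℤ) :
    Tendsto (fun n => coeffZ (an n) k) atTop (𝓝 (coeffZ a k)) := by
  rcases le_or_gt 0 k with hk | hk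
  · simpa only [coeffZ, if_pos hk] using ha k.toNat
  · simpa only [coeffZ, if_neg (not_le.mpr hk)] using tendsto_const_nhds

lemma tendsto_padeM (ha : ∀ v, Tendsto (fun n => an n v) atTop (𝓝 (a v))) (p q : ℕ) :
    Tendsto (fun n => padeM (an n) p q) atTop (𝓝 (padeM a p q)) := by
  refine tendsto_pi_nhds.mpr ?_
  intro r
  refine tendsto_pi_nhds.mpr ?_
  intro j
  simpa only [padeM_apply] using tendsto_coeffZ ha _

lemma tendsto_padeD (ha : ∀ v, Tendsto (fun n => an n v) atTop (𝓝 (a v))) (p q : ℕ)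
    (hdet : (padeM a p q).det ≠ 0) (j : Fin q) :
    Tendsto (fun n => padeD (an n) p q j) atTop (𝓝 (padeD a p q j)) := by
  have hM := tendsto_padeM ha p q
  have hdetT : Tendsto (fun n => (padeM (an n) p q).det) atTop (𝓝 ((padeM a p q).det)) :=
    ((continuous_id.matrix_det (R := ℂ) (n := Fin q)).tendsto _).comp hM
  have hadj : Tendsto (fun n => (padeM (an n) p q).adjugate) atTop (𝓝 ((padeM a p q).adjugate)) :=
    ((continuous_id.matrix_adjugate (R := ℂ) (n := Fin q)).tendsto _).comp hM
  have hev : ∀ᶠ n in atTop, (padeM (an n) p q).det ≠ 0 :=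
    hdetT (isOpen_ne.mem_nhds hdet)
  have hinv : Tendsto (fun n => (padeM (an n) p q).det⁻¹) atTop (𝓝 ((padeM a p q).det⁻¹)) :=
    hdetT.inv₀ hdet
  -- padeD = (det⁻¹ • adjugate).mulVec b
  have key : ∀ (A : Matrix (Fin q) (Fin q) ℂ) (b : Fin q → ℂ), A.det ≠ 0 →
      A⁻¹.mulVec b j = A.det⁻¹ * ((A.adjugate).mulVec b j) := by
    intro A b hA
    rw [Matrix.inv_def, Ring.inverse_eq_inv']
    simp [Matrix.mulVec, dotProduct, Finset.mul_sum, Matrix.smul_apply, smul_eq_mul,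
      mul_assoc]
  have hb : ∀ r : Fin q, Tendsto (fun n => padeB (an n) p q r) atTop (𝓝 (padeB a p q r)) := by
    intro r
    exact (tendsto_coeffZ ha _).neg
  have hAb : Tendsto (fun n => ((padeM (an n) p q).adjugate).mulVec (padeB (an n) p q) j)
      atTop (𝓝 (((padeM a p q).adjugate).mulVec (padeB a p q) j)) := by
    simp only [Matrix.mulVec, dotProduct]
    refine tendsto_finset_sum _ fun i _ => Tendsto.mul ?_ (hb i)
    exact ((continuous_apply i).comp (continuous_apply j)).continuousAt.tendsto.comp hadj
  have : Tendsto (fun n => (padeM (an n) p q).det⁻¹ *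
      ((padeM (an n) p q).adjugate).mulVec (padeB (an n) p q) j) atTop
      (𝓝 ((padeM a p q).det⁻¹ * ((padeM a p q).adjugate).mulVec (padeB a p q) j)) :=
    hinv.mul hAb
  rw [padeD, key _ _ hdet]
  refine Tendsto.congr' ?_ this
  filter_upwards [hev] with n hn
  rw [padeD, key _ _ hn]

end Tendsto

section Tendsto2
variable {an : ℕ → ℕ → ℂ} {a : ℕ → ℂ}

lemma cTend_padeDe (ha : ∀ v, Tendsto (fun n => an n v) atTop (𝓝 (a v))) {p q : ℕ}
    (hdet : (padeM a p q).det ≠ 0) {Nu De : Polynomial ℂ} (hP : IsPadeAt a p q Nu De) :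
    CTend (fun n => padeDe (an n) p q) De := by
  intro k
  rcases Nat.eq_zero_or_pos k with rfl | hk
  · simp only [padeDe_coeff_zero, hP.2.2.1]
    exact tendsto_const_nhds
  rcases le_or_gt k q with hkq | hkq
  · have hjlt : k - 1 < q := by omega
    set j : Fin q := ⟨k - 1, hjlt⟩
    have hkj : k = j.1 + 1 := by simp only [j]; omega
    rw [hkj]
    have e1 : ∀ n, (padeDe (an n) p q).coeff (j.1+1) = padeD (an n) p q j := fun n =>
      padeDe_coeff_succ _ p q j
    simp only [e1]
    rw [isPadeAt_de_coeff hP (Ne.isUnit hdet) j]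
    exact tendsto_padeD ha p q hdet j
  · have h1 : ∀ n, (padeDe (an n) p q).coeff k = 0 := fun n =>
      Polynomial.coeff_eq_zero_of_natDegree_lt (lt_of_le_of_lt (padeDe_natDegree _ p q) hkq)
    have h2 : De.coeff k = 0 :=
      Polynomial.coeff_eq_zero_of_natDegree_lt (lt_of_le_of_lt hP.2.1 hkq)
    simp only [h1, h2]
    exact tendsto_const_nhds

lemma cTend_padeNu (ha : ∀ v, Tendsto (fun n => an n v) atTop (𝓝 (a v))) {p q : ℕ}
    (hdet : (padeM a p q).det ≠ 0) {Nu De : Polynomial ℂ} (hP : IsPadeAt a p q Nu De) :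
    CTend (fun n => padeNu (an n) p q) Nu := by
  have hDe := cTend_padeDe ha hdet hP
  intro k
  rcases le_or_gt k p with hkp | hkp
  · have h1 : ∀ n, (padeNu (an n) p q).coeff k = SZ (an n) q (padeDe (an n) p q) k := by
      intro n; rw [padeNu, polyOf_coeff, if_pos hkp]
    have h2 : Nu.coeff k = SZ a q De k := by
      rw [← hP.2.2.2 k (by omega), sum_eq_SZ a q De hP.2.1]
    simp only [h1, h2, SZ]
    exact tendsto_finset_sum _ fun i _ => (hDe i).mul (tendsto_coeffZ ha _)
  · have h1 : ∀ n, (padeNu (an n) p q).coeff k = 0 := fun n =>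
      Polynomial.coeff_eq_zero_of_natDegree_lt (lt_of_le_of_lt (padeNu_natDegree _ p q) hkp)
    have h2 : Nu.coeff k = 0 :=
      Polynomial.coeff_eq_zero_of_natDegree_lt (lt_of_le_of_lt hP.1 hkp)
    simp only [h1, h2]
    exact tendsto_const_nhds

end Tendsto2

lemma lemG {Pn Qn : ℕ → Polynomial ℂ} {P Q : Polynomial ℂ} {dP dQ : ℕ}
    (hdPn : ∀ n, (Pn n).natDegree < dP) (hdP : P.natDegree < dP)
    (hdQn : ∀ n, (Qn n).natDegree < dQ) (hdQ : Q.natDegree < dQ)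
    (hP : CTend Pn P) (hQ : CTend Qn Q) {ζn : ℕ → ℂ} {ζ : ℂ}
    (hζ : Tendsto ζn atTop (𝓝 ζ)) (K : Set ℂ) (hK : IsCompact K) (e : ℕ) :
    TendstoUniformlyOn (fun n z => (Pn n).eval (z - ζn n) * (Q.eval (z - ζ)) ^ e -
      P.eval (z - ζ) * ((Qn n).eval (z - ζn n)) ^ e) (fun _ => 0) atTop K := by
  have key := lemA (α := (Fin dP → ℂ) × (Fin dQ → ℂ) × ℂ)
    (fun pr => (∑ i : Fin dP, pr.1.1 i * (pr.2 - pr.1.2.2) ^ (i:ℕ)) * (Q.eval (pr.2 - ζ)) ^ e -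
      P.eval (pr.2 - ζ) * (∑ i : Fin dQ, pr.1.2.1 i * (pr.2 - pr.1.2.2) ^ (i:ℕ)) ^ e)
    (by
      refine Continuous.sub (Continuous.mul ?_ ?_) (Continuous.mul ?_ ?_)
      · exact continuous_finset_sum _ fun i _ => by fun_prop
      · exact ((Q.continuous).comp (by fun_prop)).pow e
      · exact (P.continuous).comp (by fun_prop)
      · exact (continuous_finset_sum _ fun i _ => by fun_prop).pow e)
    (x := fun n => ((fun i : Fin dP => (Pn n).coeff i), (fun i : Fin dQ => (Qn n).coeff i), ζn n))
    (x₀ := ((fun i : Fin dP => P.coeff i), (fun i : Fin dQ => Q.coeff i), ζ))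
    (by
      refine Tendsto.prodMk_nhds (tendsto_pi_nhds.mpr fun i => hP (i:ℕ)) ?_
      exact Tendsto.prodMk_nhds (tendsto_pi_nhds.mpr fun i => hQ (i:ℕ)) hζ) K hK
  have esum : ∀ (R : Polynomial ℂ) (dR : ℕ), R.natDegree < dR → ∀ t z : ℂ,
      (∑ i : Fin dR, R.coeff i * (z - t) ^ (i:ℕ)) = R.eval (z - t) := by
    intro R dR hR t z
    rw [Polynomial.eval_eq_sum_range' hR,
      ← Fin.sum_univ_eq_sum_range (fun i => R.coeff i * (z - t) ^ i) dR]
  refine (key.congr (Eventually.of_forall fun n z _ => ?_)).congr_right (fun z _ => ?_)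
  · simp only [esum (Pn n) dP (hdPn n) (ζn n), esum (Qn n) dQ (hdQn n) (ζn n)]
  · simp only [esum P dP hdP ζ, esum Q dQ hdQ ζ]
    ring

theorem stmt9 (Ω : Set ℂ) (hΩ : IsOpen Ω) (K L : Set ℂ)
    (hK : K ⊆ closure Ω) (hKc : IsCompact K) (hL : L ⊆ closure Ω) (hLc : IsCompact L)
    (s : ℕ) (hs : 1 ≤ s) (p q : ℕ)
    (g : ℂ → ℂ) (gd : ℕ → ℂ → ℂ) (hg : AInf Ω g gd)
    (hcond : ∀ ζ ∈ L, MemD (coeffOf gd ζ) p q ∧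
      PadeApproxDerivOn (coeffOf gd ζ) ζ p q gd K s (1 / (s : ℝ))) :
    ∃ T : Set ℂ, T ⊆ closure Ω ∧ IsCompact T ∧ K ∪ L ⊆ T ∧
      ∃ δ : ℝ, 0 < δ ∧ ∃ m : ℕ,
        ∀ g' : ℂ → ℂ, ∀ gd' : ℕ → ℂ → ℂ, AInf Ω g' gd' →
          (∀ l ≤ m, ∀ z ∈ T, ‖gd' l z - gd l z‖ < δ) →
          ∀ ζ ∈ L, MemD (coeffOf gd' ζ) p q ∧
            PadeApproxDerivOn (coeffOf gd' ζ) ζ p q gd' K s (1 / (s : ℝ)) := by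
  classical
  refine ⟨K ∪ L, Set.union_subset hK hL, hKc.union hLc, subset_rfl, ?_⟩
  by_contra hcon
  push_neg at hcon
  have hcon' : ∀ n : ℕ, ∃ g' : ℂ → ℂ, ∃ gd' : ℕ → ℂ → ℂ, AInf Ω g' gd' ∧
      (∀ l ≤ n, ∀ z ∈ K ∪ L, ‖gd' l z - gd l z‖ < 1/((n:ℝ)+1)) ∧
      ∃ ζ ∈ L, ¬(MemD (coeffOf gd' ζ) p q ∧
        PadeApproxDerivOn (coeffOf gd' ζ) ζ p q gd' K s (1 / (s : ℝ))) := by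
    intro n
    obtain ⟨g', gd', h1, h2, ζ, hζ, h3⟩ := hcon (1/((n:ℝ)+1)) (by positivity) n
    exact ⟨g', gd', h1, h2, ζ, hζ, fun hc => (h3 hc.1) hc.2⟩
  choose G Gd hA hclose ζs hζsL hfail using hcon'
  obtain ⟨ζstar, hζstarL, φ, hφ, hζtend⟩ := hLc.tendsto_subseq hζsL
  set ζn : ℕ → ℂ := fun n => ζs (φ n) with hζndef
  set an : ℕ → ℕ → ℂ := fun n => coeffOf (Gd (φ n)) (ζn n) with handef
  set a : ℕ → ℂ := coeffOf gd ζstar with hadef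
  -- coefficientwise convergence
  have ha : ∀ v, Tendsto (fun n => an n v) atTop (𝓝 (a v)) := by
    intro v
    have h1 : Tendsto (fun n => Gd (φ n) v (ζn n) - gd v (ζn n)) atTop (𝓝 (0:ℂ)) := by
      refine squeeze_zero_norm' (a := fun n : ℕ => 1/((n:ℝ)+1))
        ?_ tendsto_one_div_add_atTop_nhds_zero_nat
      filter_upwards [eventually_ge_atTop v] with n hn
      have hvφ : v ≤ φ n := le_trans hn hφ.le_apply
      have hcl := hclose (φ n) v hvφ (ζn n) (Or.inr (hζsL (φ n)))
      refine le_trans hcl.le (one_div_le_one_div_of_le (by positivity) ?_)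
      have hnφ : (n:ℝ) ≤ (φ n : ℝ) := Nat.cast_le.mpr hφ.le_apply
      linarith
    have h2 : Tendsto (fun n => gd v (ζn n)) atTop (𝓝 (gd v ζstar)) := by
      have hc : ContinuousWithinAt (gd v) (closure Ω) ζstar := (hg.2.1 v) ζstar (hL hζstarL)
      exact hc.tendsto.comp (tendsto_nhdsWithin_iff.mpr
        ⟨hζtend, Eventually.of_forall fun n => hL (hζsL (φ n))⟩)
    have h3 := h1.add h2
    rw [zero_add] at h3
    have heq : (fun n => Gd (φ n) v (ζn n) - gd v (ζn n) + gd v (ζn n)) =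
        fun n => Gd (φ n) v (ζn n) := by funext n; ring
    rw [heq] at h3
    simpa only [handef, hadef, coeffOf] using h3.div_const ((Nat.factorial v : ℂ))
  obtain ⟨hmemD, hpade⟩ := hcond ζstar hζstarL
  obtain ⟨Nu₀, De₀, hP0, hDe0ne, hder0⟩ := hpade
  have hdet : (padeM a p q).det ≠ 0 := (memD_iff a p q).mp hmemD
  have E0 : ∀ᶠ n in atTop, (padeM (an n) p q).det ≠ 0 := by
    have hdetT : Tendsto (fun n => (padeM (an n) p q).det) atTop (𝓝 ((padeM a p q).det)) :=
      ((continuous_id.matrix_det (R := ℂ) (n := Fin q)).tendsto _).comp (tendsto_padeM ha p q)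
    exact hdetT (isOpen_ne.mem_nhds hdet)
  have hDeC : CTend (fun n => padeDe (an n) p q) De₀ := cTend_padeDe ha hdet hP0
  have hNuC : CTend (fun n => padeNu (an n) p q) Nu₀ := cTend_padeNu ha hdet hP0
  rcases K.eq_empty_or_nonempty with rfl | hKne
  · obtain ⟨n, hn⟩ := E0.exists
    refine hfail (φ n) ⟨(memD_iff _ p q).mpr hn,
      padeNu (an n) p q, padeDe (an n) p q, isPadeAt_canonical _ p q (Ne.isUnit hn),
      fun z hz => absurd hz (Set.notMem_empty z),
      fun l _ z hz => absurd hz (Set.notMem_empty z)⟩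
  -- K nonempty
  have hDe0cont : ContinuousOn (fun z => ‖De₀.eval (z - ζstar)‖) K :=
    continuous_norm.comp_continuousOn
      ((De₀.continuous.comp (continuous_id.sub continuous_const)).continuousOn)
  obtain ⟨z₀, hz₀K, hz₀min⟩ := hKc.exists_isMinOn hKne hDe0cont
  set ε : ℝ := ‖De₀.eval (z₀ - ζstar)‖ with hεdef
  have hεpos : 0 < ε := by
    have := hDe0ne z₀ hz₀K
    exact norm_pos_iff.mpr this
  have hεle : ∀ z ∈ K, ε ≤ ‖De₀.eval (z - ζstar)‖ := fun z hz =>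
    hz₀min hz
  -- uniform convergence of denominators
  have E2 : ∀ᶠ n in atTop, ∀ z ∈ K,
      ‖(padeDe (an n) p q).eval (z - ζn n) - De₀.eval (z - ζstar)‖ < ε/2 := by
    have hunif := lemB (d := q+1) (Pn := fun n => padeDe (an n) p q) (P := De₀)
      (fun n => Nat.lt_succ_of_le (padeDe_natDegree _ p q)) (Nat.lt_succ_of_le hP0.2.1)
      hDeC hζtend K hKc
    rw [Metric.tendstoUniformlyOn_iff] at hunif
    filter_upwards [hunif (ε/2) (by positivity)] with n hn z hz
    have := hn z hz
    rwa [dist_eq_norm, norm_sub_rev] at this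
  -- slack η
  set U : ℕ → ℂ → ℂ := fun l z =>
    (ratNum Nu₀ De₀ l).eval (z - ζstar) / (De₀.eval (z - ζstar)) ^ (l+1) with hUdef
  have hU : ∀ l, ∀ z ∈ K, iteratedDeriv l
      (fun w => Polynomial.eval (w - ζstar) Nu₀ / Polynomial.eval (w - ζstar) De₀) z = U l z :=
    fun l z hz => iteratedDeriv_ratio Nu₀ De₀ ζstar l z (hDe0ne z hz)
  have hΦcont : ∀ l, ContinuousOn (fun z => ‖U l z - gd l z‖) K := by
    intro l
    apply continuous_norm.comp_continuousOn
    apply ContinuousOn.sub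
    · exact ContinuousOn.div
        (((ratNum Nu₀ De₀ l).continuous.comp (continuous_id.sub continuous_const)).continuousOn)
        (((De₀.continuous.comp (continuous_id.sub continuous_const)).pow (l+1)).continuousOn)
        (fun z hz => pow_ne_zero _ (hDe0ne z hz))
    · exact (hg.2.1 l).mono hK
  choose zm hzmK hzmMax using fun l => hKc.exists_isMaxOn hKne (hΦcont l)
  set cl : ℕ → ℝ := fun l => ‖U l (zm l) - gd l (zm l)‖ with hcldef
  have hcl : ∀ l ≤ s, cl l < 1/(s:ℝ) := by
    intro l hl
    have := hder0 l hl (zm l) (hzmK l)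
    rwa [hU l (zm l) (hzmK l)] at this
  set η : ℝ := (Finset.range (s+1)).inf' Finset.nonempty_range_add_one (fun l => 1/(s:ℝ) - cl l) with hηdef
  have hηpos : 0 < η := by
    rw [hηdef, Finset.lt_inf'_iff]
    intro l hl
    have := hcl l (by simpa [Nat.lt_succ_iff] using hl)
    linarith
  have hbound : ∀ l ≤ s, ∀ z ∈ K, ‖U l z - gd l z‖ ≤ 1/(s:ℝ) - η := by
    intro l hl z hz
    have h1 : ‖U l z - gd l z‖ ≤ cl l := hzmMax l hz
    have h2 : η ≤ 1/(s:ℝ) - cl l :=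
      Finset.inf'_le _ (by simp [Nat.lt_succ_iff]; omega)
    linarith
  set c : ℝ := (min 1 (ε*ε/2)) ^ (s+1) with hcdef
  have hcpos : 0 < c := pow_pos (lt_min one_pos (by positivity)) _
  -- uniform smallness of the cross terms
  have E3 : ∀ᶠ n in atTop, ∀ l ∈ Finset.range (s+1), ∀ z ∈ K,
      ‖(ratNum (padeNu (an n) p q) (padeDe (an n) p q) l).eval (z - ζn n) *
          (De₀.eval (z - ζstar)) ^ (l+1) -
        (ratNum Nu₀ De₀ l).eval (z - ζstar) *
          ((padeDe (an n) p q).eval (z - ζn n)) ^ (l+1)‖ < η/3 * c := by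
    rw [eventually_all_finset]
    intro l hl
    have hls : l ≤ s := by simpa [Nat.lt_succ_iff] using hl
    have hG := lemG (dP := p + s*(q+1) + 1) (dQ := q + 1)
      (Pn := fun n => ratNum (padeNu (an n) p q) (padeDe (an n) p q) l)
      (P := ratNum Nu₀ De₀ l) (Qn := fun n => padeDe (an n) p q) (Q := De₀)
      (fun n => by
        show (ratNum (padeNu (an n) p q) (padeDe (an n) p q) l).natDegree < p + s*(q+1) + 1
        have := ratNum_natDegree_le (padeNu (an n) p q) (padeDe (an n) p q) p q
          (padeNu_natDegree _ p q) (padeDe_natDegree _ p q) l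
        have h2 : p + l*(q+1) ≤ p + s*(q+1) := by
          have : l*(q+1) ≤ s*(q+1) := Nat.mul_le_mul_right _ hls
          omega
        omega)
      (by
        have := ratNum_natDegree_le Nu₀ De₀ p q hP0.1 hP0.2.1 l
        have h2 : p + l*(q+1) ≤ p + s*(q+1) := by
          have : l*(q+1) ≤ s*(q+1) := Nat.mul_le_mul_right _ hls
          omega
        omega)
      (fun n => Nat.lt_succ_of_le (padeDe_natDegree _ p q)) (Nat.lt_succ_of_le hP0.2.1)
      (hNuC.ratNum hDeC l) hDeC hζtend K hKc (l+1)
    rw [Metric.tendstoUniformlyOn_iff] at hG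
    filter_upwards [hG (η/3 * c) (by positivity)] with n hn z hz
    have := hn z hz
    rwa [dist_eq_norm, zero_sub, norm_neg] at this
  have E4 : ∀ᶠ n in atTop, 1/((φ n : ℝ)+1) < η/3 := by
    have h4 := tendsto_one_div_add_atTop_nhds_zero_nat.eventually
      (gt_mem_nhds (show (0:ℝ) < η/3 by positivity))
    filter_upwards [h4] with n hn
    refine lt_of_le_of_lt ?_ hn
    apply one_div_le_one_div_of_le (by positivity)
    have hnφ : (n:ℝ) ≤ (φ n : ℝ) := Nat.cast_le.mpr hφ.le_apply
    linarith
  have E5 : ∀ᶠ n in atTop, s ≤ φ n :=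
    (eventually_ge_atTop s).mono fun n hn => le_trans hn hφ.le_apply
  obtain ⟨n, h0, h2, h3, h4, h5⟩ := (E0.and (E2.and (E3.and (E4.and E5)))).exists
  -- lower bound on the new denominators on K
  have hDenlb : ∀ z ∈ K, ε/2 ≤ ‖(padeDe (an n) p q).eval (z - ζn n)‖ := by
    intro z hz
    have ha1 := h2 z hz
    have ha2 := hεle z hz
    have ht : ‖De₀.eval (z - ζstar)‖ -
        ‖(padeDe (an n) p q).eval (z - ζn n)‖ ≤
        ‖(padeDe (an n) p q).eval (z - ζn n) - De₀.eval (z - ζstar)‖ := by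
      have := norm_sub_norm_le (De₀.eval (z - ζstar))
        ((padeDe (an n) p q).eval (z - ζn n))
      rw [norm_sub_rev]
      exact this
    linarith
  have hDenne : ∀ z ∈ K, (padeDe (an n) p q).eval (z - ζn n) ≠ 0 := by
    intro z hz h
    have := hDenlb z hz
    rw [h] at this
    simp at this
    linarith
  refine hfail (φ n) ⟨(memD_iff _ p q).mpr h0,
    padeNu (an n) p q, padeDe (an n) p q, isPadeAt_canonical _ p q (Ne.isUnit h0),
    hDenne, ?_⟩
  intro l hls z hz
  have hrw := iteratedDeriv_ratio (padeNu (an n) p q) (padeDe (an n) p q) (ζn n) l z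
    (hDenne z hz)
  rw [hrw]
  set X : ℂ := (ratNum (padeNu (an n) p q) (padeDe (an n) p q) l).eval (z - ζn n) with hX
  set Y : ℂ := ((padeDe (an n) p q).eval (z - ζn n)) ^ (l+1) with hY
  set A : ℂ := (ratNum Nu₀ De₀ l).eval (z - ζstar) with hA2
  set B : ℂ := (De₀.eval (z - ζstar)) ^ (l+1) with hB
  have hYne : Y ≠ 0 := pow_ne_zero _ (hDenne z hz)
  have hBne : B ≠ 0 := pow_ne_zero _ (hDe0ne z hz)
  have hdiff : X/Y - A/B = (X*B - A*Y)/(Y*B) := by field_simp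
  -- |Y * B| ≥ c
  have habsY : (ε/2) ^ (l+1) ≤ ‖Y‖ := by
    rw [hY, norm_pow]
    exact pow_le_pow_left₀ (by positivity) (hDenlb z hz) _
  have habsB : ε ^ (l+1) ≤ ‖B‖ := by
    rw [hB, norm_pow]
    exact pow_le_pow_left₀ (le_of_lt hεpos) (hεle z hz) _
  have hYBge : c ≤ ‖Y‖ * ‖B‖ := by
    have h1 : (ε/2) ^ (l+1) * ε ^ (l+1) = (ε*ε/2) ^ (l+1) := by
      rw [← mul_pow]; ring_nf
    have h2 : (min 1 (ε*ε/2)) ^ (s+1) ≤ (min 1 (ε*ε/2)) ^ (l+1) := by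
      apply pow_le_pow_of_le_one (le_min zero_le_one (by positivity)) (min_le_left _ _)
      omega
    have h3 : (min 1 (ε*ε/2)) ^ (l+1) ≤ (ε*ε/2) ^ (l+1) :=
      pow_le_pow_left₀ (le_min zero_le_one (by positivity)) (min_le_right _ _) _
    have h4 : (ε/2) ^ (l+1) * ε ^ (l+1) ≤ ‖Y‖ * ‖B‖ :=
      mul_le_mul habsY habsB (by positivity) (norm_nonneg _)
    calc c ≤ (min 1 (ε*ε/2)) ^ (l+1) := h2
      _ ≤ (ε*ε/2) ^ (l+1) := h3
      _ = (ε/2) ^ (l+1) * ε ^ (l+1) := h1.symm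
      _ ≤ _ := h4
  -- first piece
  have hfirst : ‖X/Y - A/B‖ < η/3 := by
    rw [hdiff, norm_div, norm_mul]
    have hnum : ‖X*B - A*Y‖ < η/3 * c :=
      h3 l (Finset.mem_range.mpr (by omega)) z hz
    have hden : 0 < ‖Y‖ * ‖B‖ := lt_of_lt_of_le hcpos hYBge
    rw [div_lt_iff₀ hden]
    calc ‖X*B - A*Y‖ < η/3 * c := hnum
      _ ≤ η/3 * (‖Y‖ * ‖B‖) :=
        mul_le_mul_of_nonneg_left hYBge (by positivity)
  have hUeq : U l z = A / B := rfl
  have hsecond : ‖A/B - gd l z‖ ≤ 1/(s:ℝ) - η := by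
    have := hbound l hls z hz
    rwa [hUeq] at this
  have hthird : ‖gd l z - Gd (φ n) l z‖ < η/3 := by
    have hcl := hclose (φ n) l (le_trans hls h5) z (Or.inl hz)
    rw [norm_sub_rev]
    exact lt_trans hcl h4
  have htri : X/Y - Gd (φ n) l z =
      (X/Y - A/B) + ((A/B - gd l z) + (gd l z - Gd (φ n) l z)) := by ring
  calc ‖X/Y - Gd (φ n) l z‖
      ≤ ‖X/Y - A/B‖ +
        ‖(A/B - gd l z) + (gd l z - Gd (φ n) l z)‖ := by
        rw [htri]; exact norm_add_le _ _
    _ ≤ ‖X/Y - A/B‖ +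
        (‖A/B - gd l z‖ + ‖gd l z - Gd (φ n) l z‖) := by
        have := norm_add_le (A/B - gd l z) (gd l z - Gd (φ n) l z)
        linarith
    _ < 1/(s:ℝ) := by linarith
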